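/- arXiv:2505.21991 — 3 statements merged into one kernel-verified Lean document; each statement's English description precedes it below -/
import Mathlib

section
/- (Theorem 1, Eq. (1), semantic core) Let E be a real normed additive commutative group, let Ψ ⊆ E, and let I be a set of instructions preserving Ψ with a subset I* ⊆ I. Let Δ* and Δ₂ be nonnegative reals such that: (i) ‖σ s₁ − σ s₂‖ ≤ ‖s₁ − s₂‖ + Δ* for every σ ∈ I* and all s₁, s₂ ∈ Ψ; (ii) ‖σ₁ s₁ − σ₂ s₂‖ ≤ ‖s₁ − s₂‖ + Δ₂ for every σ₁ ∈ I, σ₂ ∈ I* and all s₁, s₂ ∈ Ψ. Let σ and σ* be length-L programs with σ(i) ∈ I and σ*(i) ∈ I* for every i, let s₀ ∈ Ψ, and let d be the instruction editing distance between σ and σ*. Then the outputs satisfy ‖(output of σ on s₀) − (output of σ* on s₀)‖ ≤ Δ₂·d + Δ*·(L − d). -/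
open scoped Classical

private lemma foldl_mem {E : Type*} (Ψ : Set E) (I : Set (E → E))
    (hpres : ∀ σ ∈ I, ∀ s ∈ Ψ, σ s ∈ Ψ) :
    ∀ (l : List (E → E)), (∀ f ∈ l, f ∈ I) → ∀ s ∈ Ψ,
      l.foldl (fun s g => g s) s ∈ Ψ := by
  intro l
  induction l with
  | nil => intro _ s hs; simpa using hs
  | cons f t ih =>
    intro hl s hs
    exact ih (fun g hg => hl g (List.mem_cons_of_mem f hg)) (f s)
      (hpres f (hl f List.mem_cons_self) s hs)

private lemma aux_core {E : Type*} [NormedAddCommGroup E]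
    (Ψ : Set E) (I Istar : Set (E → E))
    (hpres : ∀ σ ∈ I, ∀ s ∈ Ψ, σ s ∈ Ψ)
    (hsub : Istar ⊆ I)
    (Δstar Δ₂ : ℝ) (hΔstar : 0 ≤ Δstar) (hΔ₂ : 0 ≤ Δ₂)
    (hone : ∀ σ ∈ Istar, ∀ s₁ ∈ Ψ, ∀ s₂ ∈ Ψ,
      ‖σ s₁ - σ s₂‖ ≤ ‖s₁ - s₂‖ + Δstar)
    (htwo : ∀ σ₁ ∈ I, ∀ σ₂ ∈ Istar, ∀ s₁ ∈ Ψ, ∀ s₂ ∈ Ψ,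
      ‖σ₁ s₁ - σ₂ s₂‖ ≤ ‖s₁ - s₂‖ + Δ₂) :
    ∀ (L : ℕ) (σ σstar : Fin L → (E → E)),
      (∀ i, σ i ∈ I) → (∀ i, σstar i ∈ Istar) → ∀ s₀ ∈ Ψ,
      ‖(List.ofFn σ).foldl (fun s g => g s) s₀ -
        (List.ofFn σstar).foldl (fun s g => g s) s₀‖ ≤
        Δ₂ * ((Finset.univ.filter (fun i => σ i ≠ σstar i)).card : ℝ) +
        Δstar * ((L : ℝ) - ((Finset.univ.filter (fun i => σ i ≠ σstar i)).card : ℝ)) := by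
  intro L
  induction L with
  | zero =>
    intro σ σstar _ _ s₀ _
    simp
  | succ L ih =>
    intro σ σstar hσ hσstar s₀ hs₀
    set τ : Fin L → (E → E) := fun i => σ i.castSucc with hτ
    set τs : Fin L → (E → E) := fun i => σstar i.castSucc with hτs
    have hofn : List.ofFn σ = (List.ofFn τ).concat (σ (Fin.last L)) := List.ofFn_succ' σ
    have hofns : List.ofFn σstar = (List.ofFn τs).concat (σstar (Fin.last L)) :=
      List.ofFn_succ' σstar
    set a := (List.ofFn τ).foldl (fun s g => g s) s₀ with ha
    set b := (List.ofFn τs).foldl (fun s g => g s) s₀ with hb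
    have hfold : (List.ofFn σ).foldl (fun s g => g s) s₀ = σ (Fin.last L) a := by
      rw [hofn, List.concat_eq_append, List.foldl_append]; rfl
    have hfolds : (List.ofFn σstar).foldl (fun s g => g s) s₀ = σstar (Fin.last L) b := by
      rw [hofns, List.concat_eq_append, List.foldl_append]; rfl
    have haΨ : a ∈ Ψ := by
      apply foldl_mem Ψ I hpres _ _ s₀ hs₀
      intro f hf
      obtain ⟨i, rfl⟩ := List.mem_ofFn.1 hf
      exact hσ _
    have hbΨ : b ∈ Ψ := by
      apply foldl_mem Ψ I hpres _ _ s₀ hs₀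
      intro f hf
      obtain ⟨i, rfl⟩ := List.mem_ofFn.1 hf
      exact hsub (hσstar _)
    have hih := ih τ τs (fun i => hσ _) (fun i => hσstar _) s₀ hs₀
    set D : ℕ := (Finset.univ.filter (fun i => τ i ≠ τs i)).card with hD
    have hcard : ((Finset.univ.filter (fun i : Fin (L+1) => σ i ≠ σstar i)).card : ℕ)
        = D + (if σ (Fin.last L) ≠ σstar (Fin.last L) then 1 else 0) := by
      rw [Finset.card_filter, Fin.sum_univ_castSucc, hD, Finset.card_filter]
    rw [hfold, hfolds, hcard]
    by_cases hlast : σ (Fin.last L) = σstar (Fin.last L)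
    · have hb1 := hone (σstar (Fin.last L)) (hσstar (Fin.last L)) a haΨ b hbΨ
      rw [hlast]
      simp only [hlast, ne_eq, not_true_eq_false, if_neg (not_not_intro rfl)] at *
      push_cast
      have : ‖σstar (Fin.last L) a - σstar (Fin.last L) b‖ ≤
          Δ₂ * (D:ℝ) + Δstar * ((L:ℝ) - (D:ℝ)) + Δstar := by linarith
      push_cast at this ⊢
      linarith
    · have hb2 := htwo (σ (Fin.last L)) (hσ (Fin.last L)) (σstar (Fin.last L))
        (hσstar (Fin.last L)) a haΨ b hbΨ
      rw [if_pos hlast]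
      push_cast
      linarith

/-- (Theorem 1, Eq. (1), semantic core.) Within a semantic space `Ψ` preserved by an
instruction set `I` with subset `I*`, if a shared optimal instruction expands distances by
at most `Δ*` and a pair of (arbitrary, optimal) instructions expands distances by at most
`Δ₂`, then two length-`L` programs whose instruction editing distance is `d` produce outputs
at distance at most `Δ₂·d + Δ*·(L − d)`. -/
theorem fitness_gap_semantic_core
    {E : Type*} [NormedAddCommGroup E]
    (Ψ : Set E) (I Istar : Set (E → E))
    (hpres : ∀ σ ∈ I, ∀ s ∈ Ψ, σ s ∈ Ψ)
    (hsub : Istar ⊆ I)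
    (Δstar Δ₂ : ℝ) (hΔstar : 0 ≤ Δstar) (hΔ₂ : 0 ≤ Δ₂)
    (hone : ∀ σ ∈ Istar, ∀ s₁ ∈ Ψ, ∀ s₂ ∈ Ψ,
      ‖σ s₁ - σ s₂‖ ≤ ‖s₁ - s₂‖ + Δstar)
    (htwo : ∀ σ₁ ∈ I, ∀ σ₂ ∈ Istar, ∀ s₁ ∈ Ψ, ∀ s₂ ∈ Ψ,
      ‖σ₁ s₁ - σ₂ s₂‖ ≤ ‖s₁ - s₂‖ + Δ₂)
    (L : ℕ) (σ σstar : Fin L → (E → E))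
    (hσ : ∀ i, σ i ∈ I) (hσstar : ∀ i, σstar i ∈ Istar)
    (s₀ : E) (hs₀ : s₀ ∈ Ψ)
    (d : ℕ) (hd : d = Nat.card {i : Fin L // σ i ≠ σstar i}) :
    ‖(List.ofFn σ).foldl (fun s g => g s) s₀ -
      (List.ofFn σstar).foldl (fun s g => g s) s₀‖ ≤
      Δ₂ * (d : ℝ) + Δstar * ((L : ℝ) - (d : ℝ)) := by
  have hd' : d = (Finset.univ.filter (fun i => σ i ≠ σstar i)).card := by
    rw [hd, Nat.card_eq_fintype_card, Fintype.card_subtype]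
  rw [hd']
  exact aux_core Ψ I Istar hpres hsub Δstar Δ₂ hΔstar hΔ₂ hone htwo L σ σstar hσ hσstar s₀ hs₀
end

section
/- (Theorem 1, Eq. (1)) Let E be a real normed additive commutative group, let Ψ ⊆ E, and let I be a set of instructions preserving Ψ with a subset I* ⊆ I. Let K, Δ* and Δ₂ be nonnegative reals such that: (i) ‖σ s₁ − σ s₂‖ ≤ ‖s₁ − s₂‖ + Δ* for every σ ∈ I* and all s₁, s₂ ∈ Ψ; (ii) ‖σ₁ s₁ − σ₂ s₂‖ ≤ ‖s₁ − s₂‖ + Δ₂ for every σ₁ ∈ I, σ₂ ∈ I* and all s₁, s₂ ∈ Ψ. Let σ and σ* be length-L programs with σ(i) ∈ I and σ*(i) ∈ I* for every i, let s₀ ∈ Ψ, let d be the instruction editing distance between σ and σ*, write s* for the output of σ* on s₀, and let f : E → ℝ satisfy |f(s) − f(s*)| ≤ K·‖s − s*‖ for every s ∈ Ψ. Then |f(output of σ on s₀) − f(s*)| ≤ K·(Δ₂·d + Δ*·(L − d)). -/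
/-- (Theorem 1, Eq. (1).) Fitness-gap supremum: under the semantic expansion bounds `Δ*`
and `Δ₂` and a Lipschitz-type fitness bound with constant `K` around the target semantics
`s* = output of σ* on s₀`, the fitness gap between a program `σ` and an optimal program
`σ*` at instruction editing distance `d` is at most `K·(Δ₂·d + Δ*·(L − d))`. -/
theorem fitness_gap_supremum
    {E : Type*} [NormedAddCommGroup E]
    (Ψ : Set E) (I Istar : Set (E → E))
    (hpres : ∀ σ ∈ I, ∀ s ∈ Ψ, σ s ∈ Ψ)
    (hsub : Istar ⊆ I)
    (K Δstar Δ₂ : ℝ) (hK : 0 ≤ K) (hΔstar : 0 ≤ Δstar) (hΔ₂ : 0 ≤ Δ₂)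
    (hone : ∀ σ ∈ Istar, ∀ s₁ ∈ Ψ, ∀ s₂ ∈ Ψ,
      ‖σ s₁ - σ s₂‖ ≤ ‖s₁ - s₂‖ + Δstar)
    (htwo : ∀ σ₁ ∈ I, ∀ σ₂ ∈ Istar, ∀ s₁ ∈ Ψ, ∀ s₂ ∈ Ψ,
      ‖σ₁ s₁ - σ₂ s₂‖ ≤ ‖s₁ - s₂‖ + Δ₂)
    (L : ℕ) (σ σstar : Fin L → (E → E))
    (hσ : ∀ i, σ i ∈ I) (hσstar : ∀ i, σstar i ∈ Istar)
    (s₀ : E) (hs₀ : s₀ ∈ Ψ)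
    (d : ℕ) (hd : d = Nat.card {i : Fin L // σ i ≠ σstar i})
    (sstar : E) (hsstar : sstar = (List.ofFn σstar).foldl (fun s g => g s) s₀)
    (f : E → ℝ)
    (hf : ∀ s ∈ Ψ, |f s - f sstar| ≤ K * ‖s - sstar‖) :
    |f ((List.ofFn σ).foldl (fun s g => g s) s₀) - f sstar| ≤
      K * (Δ₂ * (d : ℝ) + Δstar * ((L : ℝ) - (d : ℝ))) := by
  classical
  set A : ℕ → E := fun k => ((List.ofFn σ).take k).foldl (fun s g => g s) s₀ with hA
  set B : ℕ → E := fun k => ((List.ofFn σstar).take k).foldl (fun s g => g s) s₀ with hB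
  set c : ℕ → ℝ := fun i =>
    if h : i < L then (if σ ⟨i, h⟩ = σstar ⟨i, h⟩ then Δstar else Δ₂) else 0 with hc
  have hAstep : ∀ k (h : k < L), A (k + 1) = σ ⟨k, h⟩ (A k) := by
    intro k h
    simp only [hA]
    rw [List.take_succ]
    simp [List.getElem?_ofFn, h, List.foldl_append]
  have hBstep : ∀ k (h : k < L), B (k + 1) = σstar ⟨k, h⟩ (B k) := by
    intro k h
    simp only [hB]
    rw [List.take_succ]
    simp [List.getElem?_ofFn, h, List.foldl_append]
  have key : ∀ k, k ≤ L → A k ∈ Ψ ∧ B k ∈ Ψ ∧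
      ‖A k - B k‖ ≤ ∑ i ∈ Finset.range k, c i := by
    intro k
    induction k with
    | zero => intro _; simpa [hA, hB] using hs₀
    | succ k ih =>
      intro hk
      have hkL : k < L := hk
      obtain ⟨hAk, hBk, hbound⟩ := ih (le_of_lt hkL)
      refine ⟨?_, ?_, ?_⟩
      · rw [hAstep k hkL]; exact hpres _ (hσ _) _ hAk
      · rw [hBstep k hkL]; exact hpres _ (hsub (hσstar _)) _ hBk
      · rw [hAstep k hkL, hBstep k hkL, Finset.sum_range_succ]
        have hck : c k = if σ ⟨k, hkL⟩ = σstar ⟨k, hkL⟩ then Δstar else Δ₂ := by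
          simp [hc, hkL]
        rw [hck]
        by_cases hEq : σ ⟨k, hkL⟩ = σstar ⟨k, hkL⟩
        · rw [if_pos hEq, hEq]
          calc ‖σstar ⟨k, hkL⟩ (A k) - σstar ⟨k, hkL⟩ (B k)‖
              ≤ ‖A k - B k‖ + Δstar := hone _ (hσstar _) _ hAk _ hBk
            _ ≤ (∑ i ∈ Finset.range k, c i) + Δstar := by linarith
        · rw [if_neg hEq]
          calc ‖σ ⟨k, hkL⟩ (A k) - σstar ⟨k, hkL⟩ (B k)‖
              ≤ ‖A k - B k‖ + Δ₂ := htwo _ (hσ _) _ (hσstar _) _ hAk _ hBk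
            _ ≤ (∑ i ∈ Finset.range k, c i) + Δ₂ := by linarith
  obtain ⟨hAL, hBL, hbound⟩ := key L le_rfl
  have hALeq : A L = (List.ofFn σ).foldl (fun s g => g s) s₀ := by
    simp [hA, List.take_of_length_le, List.length_ofFn]
  have hBLeq : B L = sstar := by
    rw [hsstar]; simp [hB, List.take_of_length_le, List.length_ofFn]
  -- compute the sum
  have hsum : ∑ i ∈ Finset.range L, c i = Δ₂ * d + Δstar * ((L : ℝ) - d) := by
    have h1 : ∑ i ∈ Finset.range L, c i
        = ∑ i : Fin L, (if σ i = σstar i then Δstar else Δ₂) := by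
      rw [Finset.sum_range fun i => c i]
      apply Finset.sum_congr rfl
      intro i _
      simp [hc, i.isLt]
    rw [h1, Finset.sum_ite]
    have hdcard : d = (Finset.univ.filter (fun i : Fin L => σ i ≠ σstar i)).card := by
      rw [hd, Nat.card_eq_fintype_card, Fintype.card_subtype]
    have hcompl : (Finset.univ.filter (fun i : Fin L => σ i = σstar i)).card = L - d := by
      rw [hdcard]
      have := Finset.card_filter_add_card_filter_not
        (s := (Finset.univ : Finset (Fin L))) (p := fun i : Fin L => σ i = σstar i)
      simp only [Finset.card_univ, Fintype.card_fin] at this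
      simp only [ne_eq]
      omega
    have hdle : d ≤ L := by
      rw [hdcard]
      calc _ ≤ (Finset.univ : Finset (Fin L)).card := Finset.card_filter_le _ _
        _ = L := by simp
    simp only [Finset.sum_const, nsmul_eq_mul, hcompl, hdcard.symm]
    rw [Nat.cast_sub hdle]
    ring
  rw [hALeq] at hbound hAL
  rw [hBLeq] at hbound
  calc |f ((List.ofFn σ).foldl (fun s g => g s) s₀) - f sstar|
      ≤ K * ‖(List.ofFn σ).foldl (fun s g => g s) s₀ - sstar‖ := hf _ hAL
    _ ≤ K * (Δ₂ * d + Δstar * ((L : ℝ) - d)) := by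
        rw [← hsum]; exact mul_le_mul_of_nonneg_left hbound hK
end

section
/- (Theorem 2, Similar Fitness Probability) Let P be a finite set of elements of a type α, δ : α → ℕ, f : α → β, and fix d : ℕ and v : β. Define P^d = {ρ ∈ P : δ(ρ) ≤ d}, P^{d+1} = {ρ ∈ P : δ(ρ) ≤ d+1}, P^(d,v) = {ρ ∈ P^d : f(ρ) = v}, and P^(d+1,v) = {ρ ∈ P^{d+1} : f(ρ) = v}. Assume 1 ≤ |P^(d,v)|, |P^d| < |P^{d+1}|, and (as real numbers) |P^(d+1,v) \ P^(d,v)| / |P^{d+1} \ P^d| ≤ |P^(d,v)|/|P^d| + |P^(d,v)|/|P^{d+1} \ P^d|. Then | |P^(d+1,v)|/|P^{d+1}| − |P^(d,v)|/|P^d| | < |P^(d,v)|/|P^d|. -/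
/-- (Theorem 2, Similar Fitness Probability.) If the conditional fitness probability on the
newly added shell `P^{d+1} \ P^d` does not exceed `|P^(d,v)|/|P^d| + |P^(d,v)|/|P^{d+1} \ P^d|`,
then the fitness probabilities over `P^{d+1}` and `P^d` differ by less than `|P^(d,v)|/|P^d|`. -/
theorem similar_fitness_probability
    {α β : Type*} [DecidableEq α] [DecidableEq β]
    (P : Finset α) (δ : α → ℕ) (f : α → β) (d : ℕ) (v : β)
    (Pd Pd1 Pdv Pd1v : Finset α)
    (hPd : Pd = P.filter fun ρ => δ ρ ≤ d)
    (hPd1 : Pd1 = P.filter fun ρ => δ ρ ≤ d + 1)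
    (hPdv : Pdv = Pd.filter fun ρ => f ρ = v)
    (hPd1v : Pd1v = Pd1.filter fun ρ => f ρ = v)
    (hcard : 1 ≤ Pdv.card)
    (hlt : Pd.card < Pd1.card)
    (hratio : ((Pd1v \ Pdv).card : ℝ) / ((Pd1 \ Pd).card : ℝ) ≤
      (Pdv.card : ℝ) / (Pd.card : ℝ) + (Pdv.card : ℝ) / ((Pd1 \ Pd).card : ℝ)) :
    |(Pd1v.card : ℝ) / (Pd1.card : ℝ) - (Pdv.card : ℝ) / (Pd.card : ℝ)| <
      (Pdv.card : ℝ) / (Pd.card : ℝ) := by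

  have hsub1 : Pd ⊆ Pd1 := by
    rw [hPd, hPd1]
    intro x hx
    rw [Finset.mem_filter] at hx ⊢
    exact ⟨hx.1, le_trans hx.2 (Nat.le_succ d)⟩
  have hsubv : Pdv ⊆ Pd1v := by
    rw [hPdv, hPd1v]
    exact Finset.monotone_filter_left _ hsub1
  have hsubvd : Pdv ⊆ Pd := by rw [hPdv]; exact Finset.filter_subset _ _
  have hshell : Pd1v \ Pdv ⊆ Pd1 \ Pd := by
    intro x hx
    rw [Finset.mem_sdiff] at hx ⊢
    obtain ⟨hx1, hx2⟩ := hx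
    rw [hPd1v, Finset.mem_filter] at hx1
    refine ⟨hx1.1, fun hxd => hx2 ?_⟩
    rw [hPdv, Finset.mem_filter]
    exact ⟨hxd, hx1.2⟩
  set a := Pdv.card with ha
  set n := Pd.card with hn
  set N := Pd1.card with hN
  set b := (Pd1v \ Pdv).card with hb
  have hAB : b + a = Pd1v.card := Finset.card_sdiff_add_card_eq_card hsubv
  have hm : (Pd1 \ Pd).card = N - n := Finset.card_sdiff_of_subset hsub1
  have han : a ≤ n := Finset.card_le_card hsubvd
  have hn1 : 1 ≤ n := le_trans hcard han
  -- real versions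
  have hnR : (0:ℝ) < n := by exact_mod_cast hn1
  have hNR : (n:ℝ) < N := by exact_mod_cast hlt
  have hNpos : (0:ℝ) < N := lt_trans hnR hNR
  have hmR : ((Pd1 \ Pd).card : ℝ) = (N:ℝ) - n := by
    rw [hm]; push_cast [Nat.cast_sub (le_of_lt hlt)]; ring
  have hmpos : (0:ℝ) < (N:ℝ) - n := by linarith
  have haR : (1:ℝ) ≤ a := by exact_mod_cast hcard
  have hanR : (a:ℝ) ≤ n := by exact_mod_cast han
  have hABR : ((Pd1v.card : ℝ)) = (b:ℝ) + a := by exact_mod_cast hAB.symm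
  rw [hmR] at hratio
  rw [hABR, abs_lt]
  have hbR : (0:ℝ) ≤ b := Nat.cast_nonneg b
  constructor
  · have h1 : (0:ℝ) < ((b:ℝ) + a) / N := by positivity
    linarith
  · rw [div_add_div _ _ (ne_of_gt hnR) (ne_of_gt hmpos), div_le_div_iff₀ hmpos (by positivity)] at hratio
    have key : (b:ℝ) * n ≤ (a:ℝ) * N := by nlinarith
    have h2 : ((b:ℝ) + a) / N < 2 * a / n := by
      rw [div_lt_div_iff₀ hNpos hnR]
      nlinarith
    have h3 : (a:ℝ)/n + a/n = 2 * a / n := by ring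
    linarith
end
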